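/- For every guess g ∈ G and every candidate set C ⊆ S, V_{2|C|+1}(g,C) = V*(g,C); moreover LB_{2|C|+1}(C) = MinTotal(C) for every candidate set C ⊆ S. That is, the sequence of lower bounds stabilizes at the true value after at most 2|C|+1 iterations. -/

import Mathlib

/-!
Formalization of guessing games (Wordle-style), following the paper's definitions:
guesses `G`, secrets `S ⊆ G`, responses `R` with `|R| > 1`, affirmative response
`r* ∈ R`, and an answering function `a` with `a(g,s) = r* ↔ g = s`.
-/

structure GuessingGame (α ρ : Type*) [DecidableEq α] [DecidableEq ρ] where
  G : Finset α
  S : Finset α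
  R : Finset ρ
  rstar : ρ
  ans : α → α → ρ
  S_subset_G : S ⊆ G
  one_lt_card_R : 1 < R.card
  rstar_mem : rstar ∈ R
  ans_mem : ∀ g ∈ G, ∀ s ∈ S, ans g s ∈ R
  ans_eq_rstar_iff : ∀ g ∈ G, ∀ s ∈ S, (ans g s = rstar ↔ g = s)

namespace GuessingGame

variable {α ρ : Type*} [DecidableEq α] [DecidableEq ρ] (gm : GuessingGame α ρ)

/-- The split `C_{g,r} = {c ∈ C : a(g,c) = r}`. -/
def split (C : Finset α) (g : α) (r : ρ) : Finset α :=
  C.filter fun c => gm.ans g c = r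

/-- `nSplits(g,C) = |{r ∈ R : C_{g,r} ≠ ∅}|`. -/
def nSplits (g : α) (C : Finset α) : ℕ :=
  (gm.R.filter fun r => (gm.split C g r).Nonempty).card

/-- The useful guesses `UG(C)`: for `|C| > 1` the guesses `g ∈ G` with
`nSplits(g,C) ≠ 1`; for `|C| ≤ 1`, `UG(C) = C`. -/
def UG (C : Finset α) : Finset α :=
  if 1 < C.card then gm.G.filter fun g => gm.nSplits g C ≠ 1 else C

/-- `MaxSplits(C) = max_{g ∈ G} nSplits(g,C)`. -/
def MaxSplits (C : Finset α) : ℕ :=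
  gm.G.sup fun g => gm.nSplits g C

end GuessingGame

/-- `Bound(n,b)`: `Bound(0,b) = 0`, `Bound(n,1) = n(n+1)/2`, and for `n > 0`, `b > 1`,
`Bound(n,b) = Σ_{i=1}^{k} i·b^{i-1} + (k+1)·(n - (b^k - 1)/(b-1))` where
`k = ⌊log_b (n(b-1)+1)⌋`. -/
def Bound (n b : ℕ) : ℕ :=
  if n = 0 then 0
  else if b = 1 then n * (n + 1) / 2
  else
    (∑ i ∈ Finset.range (Nat.log b (n * (b - 1) + 1)), (i + 1) * b ^ i) +
      (Nat.log b (n * (b - 1) + 1) + 1) *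
        (n - (b ^ Nat.log b (n * (b - 1) + 1) - 1) / (b - 1))

namespace GuessingGame

variable {α ρ : Type*} [DecidableEq α] [DecidableEq ρ] (gm : GuessingGame α ρ)

/-- Fuel-based implementation of the well-founded recursion defining `MinTotal`:
`MinTotal(∅) = 0` and for nonempty `C`,
`MinTotal(C) = min_{g ∈ UG(C)} (|C| + Σ_{r ∈ R \ {r*}} MinTotal(C_{g,r}))`.
Fuel `|C|` suffices since for a useful guess every split is a proper subset of `C`. -/
noncomputable def MinTotalAux : ℕ → Finset α → ℕ
  | 0, _ => 0
  | n + 1, C =>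
    if C = ∅ then 0
    else
      sInf (↑((gm.UG C).image fun g =>
        C.card + ∑ r ∈ gm.R.erase gm.rstar, MinTotalAux n (gm.split C g r)) : Set ℕ)

/-- `MinTotal(C)`. -/
noncomputable def MinTotal (C : Finset α) : ℕ :=
  gm.MinTotalAux C.card C

/-- `V*(g,C) = |C| + Σ_{r ∈ R \ {r*}} MinTotal(C_{g,r})`. -/
noncomputable def Vstar (g : α) (C : Finset α) : ℕ :=
  C.card + ∑ r ∈ gm.R.erase gm.rstar, gm.MinTotal (gm.split C g r)

/-- The lower bounds `LB_i` (`i ≥ 1`; `LB 0` is junk):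
`LB_1(C) = Bound(|C|, MaxSplits(S))`, `LB_2(C) = Bound(|C|, MaxSplits(C))`, and for
`i ≥ 1`, `LB_{i+2}(∅) = 0` and `LB_{i+2}(C) = min_{g ∈ UG(C)} V_i(g,C)` for nonempty `C`,
where `V_i(g,C) = |C| + Σ_{r ∈ R \ {r*}} LB_i(C_{g,r})`. -/
noncomputable def LB : ℕ → Finset α → ℕ
  | 0, _ => 0
  | 1, C => Bound C.card (gm.MaxSplits gm.S)
  | 2, C => Bound C.card (gm.MaxSplits C)
  | n + 3, C =>
    if C = ∅ then 0
    else
      sInf (↑((gm.UG C).image fun g =>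
        C.card + ∑ r ∈ gm.R.erase gm.rstar, LB (n + 1) (gm.split C g r)) : Set ℕ)

/-- `V_i(g,C) = |C| + Σ_{r ∈ R \ {r*}} LB_i(C_{g,r})`. -/
noncomputable def V (i : ℕ) (g : α) (C : Finset α) : ℕ :=
  C.card + ∑ r ∈ gm.R.erase gm.rstar, gm.LB i (gm.split C g r)

end GuessingGame

namespace GuessingGame

variable {α ρ : Type*} [DecidableEq α] [DecidableEq ρ] (gm : GuessingGame α ρ)

lemma LB_empty (i : ℕ) : gm.LB i (∅ : Finset α) = 0 := by
  match i with
  | 0 => rfl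
  | 1 => simp [LB, Bound]
  | 2 => simp [LB, Bound]
  | n + 3 => simp [LB]

lemma split_subset (C : Finset α) (g : α) (r : ρ) : gm.split C g r ⊆ C :=
  Finset.filter_subset _ _

lemma split_card_lt {C : Finset α} (hCS : C ⊆ gm.S) (hC : C ≠ ∅) {g : α}
    (hg : g ∈ gm.UG C) {r : ρ} (hr : r ≠ gm.rstar) :
    (gm.split C g r).card < C.card := by
  by_cases h1 : 1 < C.card
  · rw [UG, if_pos h1, Finset.mem_filter] at hg
    obtain ⟨hgG, hn⟩ := hg
    obtain ⟨c, hc⟩ := Finset.nonempty_iff_ne_empty.2 hC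
    have hcS : c ∈ gm.S := hCS hc
    have h0 : gm.ans g c ∈ gm.R := gm.ans_mem g hgG c hcS
    have hmem : gm.ans g c ∈ gm.R.filter fun r => (gm.split C g r).Nonempty :=
      Finset.mem_filter.2 ⟨h0, ⟨c, Finset.mem_filter.2 ⟨hc, rfl⟩⟩⟩
    have h1' : 1 ≤ gm.nSplits g C := Finset.card_pos.2 ⟨_, hmem⟩
    have h2 : 2 ≤ gm.nSplits g C := by
      rcases Nat.lt_or_ge (gm.nSplits g C) 2 with h | h
      · exact absurd (by omega : gm.nSplits g C = 1) hn
      · exact h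
    obtain ⟨r1, hr1, r2, hr2, hne⟩ := Finset.one_lt_card.1 h2
    have key : ∃ r', r' ≠ r ∧ (gm.split C g r').Nonempty := by
      rcases eq_or_ne r1 r with rfl | hr1r
      · exact ⟨r2, fun h => hne h.symm, (Finset.mem_filter.1 hr2).2⟩
      · exact ⟨r1, hr1r, (Finset.mem_filter.1 hr1).2⟩
    obtain ⟨r', hr'ne, c', hc'⟩ := key
    have hc'C : c' ∈ C := (Finset.mem_filter.1 hc').1
    have hc'r : gm.ans g c' = r' := (Finset.mem_filter.1 hc').2
    have hnot : c' ∉ gm.split C g r := fun h =>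
      hr'ne (hc'r ▸ (Finset.mem_filter.1 h).2 ▸ rfl)
    exact Finset.card_lt_card
      ((Finset.ssubset_iff_of_subset (gm.split_subset C g r)).2 ⟨c', hc'C, hnot⟩)
  · rw [UG, if_neg h1] at hg
    have hcard : C.card = 1 := by
      have := Finset.card_pos.2 ⟨g, hg⟩
      omega
    obtain ⟨a, ha⟩ := Finset.card_eq_one.1 hcard
    have hga : g = a := by
      rw [ha, Finset.mem_singleton] at hg; exact hg
    subst hga
    have hgS : g ∈ gm.S := hCS hg
    have hgG : g ∈ gm.G := gm.S_subset_G hgS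
    have hans : gm.ans g g = gm.rstar := (gm.ans_eq_rstar_iff g hgG g hgS).2 rfl
    have : gm.split C g r = ∅ := by
      rw [split, ha, Finset.filter_singleton, if_neg (by rw [hans]; exact Ne.symm hr)]
    rw [this]
    simpa using Finset.card_pos.2 ⟨g, hg⟩

lemma minTotalAux_succ : ∀ n, ∀ C : Finset α, C ⊆ gm.S → C.card ≤ n →
    gm.MinTotalAux (n + 1) C = gm.MinTotalAux n C := by
  intro n
  induction n with
  | zero =>
    intro C _ hcard
    have : C = ∅ := Finset.card_eq_zero.1 (Nat.le_zero.1 hcard)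
    subst this
    simp [MinTotalAux]
  | succ n ih =>
    intro C hCS hcard
    by_cases hC : C = ∅
    · subst hC; simp [MinTotalAux]
    · rw [MinTotalAux, MinTotalAux, if_neg hC, if_neg hC]
      congr 2
      refine Finset.image_congr ?_
      intro g hg
      simp only [Finset.coe_sort_coe, Finset.mem_coe] at hg
      dsimp only
      congr 1
      apply Finset.sum_congr rfl
      intro r hr
      have hrne : r ≠ gm.rstar := (Finset.mem_erase.1 hr).1
      have hlt := gm.split_card_lt hCS hC hg hrne
      exact ih _ ((gm.split_subset C g r).trans hCS) (by omega)

lemma minTotalAux_eq : ∀ n, ∀ C : Finset α, C ⊆ gm.S → C.card ≤ n →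
    gm.MinTotalAux n C = gm.MinTotal C := by
  intro n
  induction n with
  | zero =>
    intro C _ hcard
    have : C = ∅ := Finset.card_eq_zero.1 (Nat.le_zero.1 hcard)
    subst this; rfl
  | succ n ih =>
    intro C hCS hcard
    rcases Nat.lt_or_ge C.card (n + 1) with h | h
    · rw [gm.minTotalAux_succ n C hCS (by omega), ih C hCS (by omega)]
    · have : C.card = n + 1 := by omega
      rw [MinTotal, this]

lemma LB_eq_aux : ∀ n, ∀ C : Finset α, C ⊆ gm.S → C.card ≤ n →
    gm.LB (2 * n + 1) C = gm.MinTotalAux n C := by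
  intro n
  induction n with
  | zero =>
    intro C _ hcard
    have : C = ∅ := Finset.card_eq_zero.1 (Nat.le_zero.1 hcard)
    subst this
    rw [gm.LB_empty]; rfl
  | succ n ih =>
    intro C hCS hcard
    have h23 : 2 * (n + 1) + 1 = 2 * n + 3 := by ring
    rw [h23]
    by_cases hC : C = ∅
    · subst hC; rw [gm.LB_empty]; simp [MinTotalAux]
    · rw [LB, MinTotalAux, if_neg hC, if_neg hC]
      congr 2
      refine Finset.image_congr ?_
      intro g hg
      simp only [Finset.coe_sort_coe, Finset.mem_coe] at hg
      dsimp only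
      congr 1
      apply Finset.sum_congr rfl
      intro r hr
      have hrne : r ≠ gm.rstar := (Finset.mem_erase.1 hr).1
      have hlt := gm.split_card_lt hCS hC hg hrne
      have h21 : 2 * n + 1 = 2 * n + 1 := rfl
      exact ih _ ((gm.split_subset C g r).trans hCS) (by omega)

end GuessingGame

section Statements

open GuessingGame

variable {α ρ : Type*} [DecidableEq α] [DecidableEq ρ]

theorem statement_18 (gm : GuessingGame α ρ) :
    (∀ g ∈ gm.G, ∀ C ⊆ gm.S, gm.V (2 * C.card + 1) g C = gm.Vstar g C) ∧
      (∀ C ⊆ gm.S, gm.LB (2 * C.card + 1) C = gm.MinTotal C) := by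
  constructor
  · intro g _ C hCS
    rw [V, Vstar]
    congr 1
    apply Finset.sum_congr rfl
    intro r _
    have hsub : gm.split C g r ⊆ gm.S := (gm.split_subset C g r).trans hCS
    have hle : (gm.split C g r).card ≤ C.card :=
      Finset.card_le_card (gm.split_subset C g r)
    rw [gm.LB_eq_aux C.card _ hsub hle, gm.minTotalAux_eq C.card _ hsub hle]
  · intro C hCS
    rw [gm.LB_eq_aux C.card C hCS le_rfl, gm.minTotalAux_eq C.card C hCS le_rfl]

end Statements
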